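/- Let p and q be partitions of [k] with cr(p) = cr(q). Then χ(p) = χ(q), and for all x, y ∈ χ(p), x ∼_p y if and only if x ∼_q y; that is, the restrictions of p and q to their common set of crossers coincide. -/
import Mathlib

/-- The block relation of a finite partition of `Fin n` (partition of `[n]`):
`x ∼_p y` iff `x` and `y` lie in the same block of `p`. -/
def PartRel {n : ℕ} (p : Finpartition (Finset.univ : Finset (Fin n))) (x y : Fin n) : Prop :=
  ∃ B ∈ p.parts, x ∈ B ∧ y ∈ B

/-- `κ` is a crossing of the relation `r`: `κ = {a,b,c,d}` with `a < b < c < d`,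
`r a c`, `r b d`, and `¬ r a b`. -/
def IsCross {n : ℕ} (r : Fin n → Fin n → Prop) (κ : Finset (Fin n)) : Prop :=
  ∃ a b c d : Fin n, a < b ∧ b < c ∧ c < d ∧ κ = {a, b, c, d} ∧ r a c ∧ r b d ∧ ¬ r a b

/-- `cr p`: the set of crossings of the partition `p`. -/
def cr {n : ℕ} (p : Finpartition (Finset.univ : Finset (Fin n))) : Set (Finset (Fin n)) :=
  {κ | IsCross (PartRel p) κ}


/-- `crossers p` (`χ(p)`): the union of all crossings of `p`. -/
def crossers {n : ℕ} (p : Finpartition (Finset.univ : Finset (Fin n))) : Set (Fin n) :=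
  {x | ∃ κ ∈ cr p, x ∈ κ}

lemma partRel_refl {n : ℕ} (p : Finpartition (Finset.univ : Finset (Fin n))) (x : Fin n) :
    PartRel p x x := by
  obtain ⟨B, hB, hx⟩ := p.exists_mem (Finset.mem_univ x)
  exact ⟨B, hB, hx, hx⟩

lemma partRel_symm {n : ℕ} {p : Finpartition (Finset.univ : Finset (Fin n))} {x y : Fin n}
    (h : PartRel p x y) : PartRel p y x := by
  obtain ⟨B, hB, hx, hy⟩ := h
  exact ⟨B, hB, hy, hx⟩

lemma partRel_trans {n : ℕ} {p : Finpartition (Finset.univ : Finset (Fin n))} {x y z : Fin n}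
    (h1 : PartRel p x y) (h2 : PartRel p y z) : PartRel p x z := by
  obtain ⟨B, hB, hx, hy⟩ := h1
  obtain ⟨C, hC, hy', hz⟩ := h2
  have hBC : B = C := p.eq_of_mem_parts hB hC hy hy'
  exact ⟨B, hB, hx, hBC ▸ hz⟩

lemma quad_eq {n : ℕ} {a b c d a' b' c' d' : Fin n}
    (h1 : a < b) (h2 : b < c) (h3 : c < d)
    (g1 : a' < b') (g2 : b' < c') (g3 : c' < d')
    (h : ({a, b, c, d} : Finset (Fin n)) = {a', b', c', d'}) :
    a = a' ∧ b = b' ∧ c = c' ∧ d = d' := by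
  have H := Finset.ext_iff.mp h
  simp only [Finset.mem_insert, Finset.mem_singleton] at H
  have ha := (H a).mp (Or.inl rfl)
  have hb := (H b).mp (Or.inr (Or.inl rfl))
  have hc := (H c).mp (Or.inr (Or.inr (Or.inl rfl)))
  have hd := (H d).mp (Or.inr (Or.inr (Or.inr rfl)))
  have ha' := (H a').mpr (Or.inl rfl)
  have hd' := (H d').mpr (Or.inr (Or.inr (Or.inr rfl)))
  simp only [Fin.ext_iff, Fin.lt_def] at *
  omega

lemma cr_iff {n : ℕ} (p : Finpartition (Finset.univ : Finset (Fin n))) {a b c d : Fin n}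
    (h1 : a < b) (h2 : b < c) (h3 : c < d) :
    ({a, b, c, d} : Finset (Fin n)) ∈ cr p ↔
      (PartRel p a c ∧ PartRel p b d ∧ ¬ PartRel p a b) := by
  constructor
  · rintro ⟨a', b', c', d', g1, g2, g3, hk, r1, r2, r3⟩
    obtain ⟨e1, e2, e3, e4⟩ := quad_eq h1 h2 h3 g1 g2 g3 hk
    subst e1; subst e2; subst e3; subst e4
    exact ⟨r1, r2, r3⟩
  · rintro ⟨r1, r2, r3⟩
    exact ⟨a, b, c, d, h1, h2, h3, rfl, r1, r2, r3⟩

/-- A "crossing pair" for both `p` and `q`: `u < v`, `u ∼ v` in both, and a pair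
`(s, t)` interleaving `(u, v)`, related in both, with `u ≁ s` in both. -/
def CPair {n : ℕ} (p q : Finpartition (Finset.univ : Finset (Fin n))) (u v : Fin n) : Prop :=
  u < v ∧ PartRel p u v ∧ PartRel q u v ∧
    ∃ s t : Fin n, PartRel p s t ∧ PartRel q s t ∧ ¬ PartRel p u s ∧ ¬ PartRel q u s ∧
      ((u < s ∧ s < v ∧ v < t) ∨ (s < u ∧ u < t ∧ t < v))

lemma crosser_pair {k : ℕ} {p q : Finpartition (Finset.univ : Finset (Fin k))}
    (h : cr p = cr q) {x : Fin k} (hx : x ∈ crossers p) :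
    ∃ u v, CPair p q u v ∧ (x = u ∨ x = v) := by
  obtain ⟨κ, hκ, hxκ⟩ := hx
  have hκq : κ ∈ cr q := h ▸ hκ
  obtain ⟨a, b, c, d, h1, h2, h3, hk, r1, r2, r3⟩ := hκ
  subst hk
  obtain ⟨q1, q2, q3⟩ := (cr_iff q h1 h2 h3).mp hκq
  have hbc : ¬ PartRel p b a := fun hr => r3 (partRel_symm hr)
  have hbcq : ¬ PartRel q b a := fun hr => q3 (partRel_symm hr)
  simp only [Finset.mem_insert, Finset.mem_singleton] at hxκ
  rcases hxκ with rfl | rfl | rfl | rfl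
  · exact ⟨x, c, ⟨h1.trans h2, r1, q1, b, d, r2, q2, r3, q3, Or.inl ⟨h1, h2, h3⟩⟩, Or.inl rfl⟩
  · exact ⟨x, d, ⟨h2.trans h3, r2, q2, a, c, r1, q1, hbc, hbcq, Or.inr ⟨h1, h2, h3⟩⟩, Or.inl rfl⟩
  · exact ⟨a, x, ⟨h1.trans h2, r1, q1, b, d, r2, q2, r3, q3, Or.inl ⟨h1, h2, h3⟩⟩, Or.inr rfl⟩
  · exact ⟨b, x, ⟨h2.trans h3, r2, q2, a, c, r1, q1, hbc, hbcq, Or.inr ⟨h1, h2, h3⟩⟩, Or.inr rfl⟩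

lemma key {k : ℕ} {p q : Finpartition (Finset.univ : Finset (Fin k))} (h : cr p = cr q)
    {u v u' v' : Fin k} (hp1 : CPair p q u v) (hp2 : CPair p q u' v')
    (huu : u < u') (hpr : PartRel p u u') : PartRel q u u' := by
  by_contra hq
  obtain ⟨huv, pr1, qr1, _, _, _, _, _, _, _⟩ := hp1
  obtain ⟨hu'v', pr2, qr2, s', t', ps', qs', nps', nqs', hshape⟩ := hp2
  -- derived q-non-relations
  have hquv' : ¬ PartRel q u v' := fun hr => hq (partRel_trans hr (partRel_symm qr2))
  -- derived p-non-relations with s'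
  have hpus' : ¬ PartRel p u s' := fun hr => nps' (partRel_trans (partRel_symm hpr) hr)
  rcases lt_trichotomy u' v with hc1 | hc1 | hc1
  · -- u' < v
    rcases lt_trichotomy v v' with hc2 | hc2 | hc2
    · -- case A: u < u' < v < v' : {u, u', v, v'} is a crossing of q but not of p
      have hcrq : ({u, u', v, v'} : Finset (Fin k)) ∈ cr q :=
        (cr_iff q huu hc1 hc2).mpr ⟨qr1, qr2, hq⟩
      rw [← h] at hcrq
      exact ((cr_iff p huu hc1 hc2).mp hcrq).2.2 hpr
    · -- v = v' : shared endpoint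
      exact hq (partRel_trans qr1 (hc2 ▸ partRel_symm qr2))
    · -- nested: use shapes below
      rcases hshape with ⟨hs1, hs2, hs3⟩ | ⟨hs1, hs2, hs3⟩
      · -- u' < s' < v' < t' : {u, s', v', t'} ∈ cr p
        have hcrp : ({u, s', v', t'} : Finset (Fin k)) ∈ cr p :=
          (cr_iff p (huu.trans hs1) hs2 hs3).mpr ⟨partRel_trans hpr pr2, ps', hpus'⟩
        rw [h] at hcrp
        exact hquv' ((cr_iff q (huu.trans hs1) hs2 hs3).mp hcrp).1
      · -- s' < u' < t' < v'
        rcases lt_trichotomy s' u with hd | hd | hd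
        · have hcrp : ({s', u, t', v'} : Finset (Fin k)) ∈ cr p :=
            (cr_iff p hd (huu.trans hs2) hs3).mpr
              ⟨ps', partRel_trans hpr pr2, fun hr => hpus' (partRel_symm hr)⟩
          rw [h] at hcrp
          exact hquv' ((cr_iff q hd (huu.trans hs2) hs3).mp hcrp).2.1
        · exact nps' (hd ▸ partRel_symm hpr)
        · have hcrp : ({u, s', u', t'} : Finset (Fin k)) ∈ cr p :=
            (cr_iff p hd hs1 hs2).mpr ⟨hpr, ps', hpus'⟩
          rw [h] at hcrp
          exact hq ((cr_iff q hd hs1 hs2).mp hcrp).1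
  · -- u' = v
    exact hq (hc1 ▸ qr1)
  · -- v < u' : case C, same shape analysis
    rcases hshape with ⟨hs1, hs2, hs3⟩ | ⟨hs1, hs2, hs3⟩
    · have hcrp : ({u, s', v', t'} : Finset (Fin k)) ∈ cr p :=
        (cr_iff p (huu.trans hs1) hs2 hs3).mpr ⟨partRel_trans hpr pr2, ps', hpus'⟩
      rw [h] at hcrp
      exact hquv' ((cr_iff q (huu.trans hs1) hs2 hs3).mp hcrp).1
    · rcases lt_trichotomy s' u with hd | hd | hd
      · have hcrp : ({s', u, t', v'} : Finset (Fin k)) ∈ cr p :=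
          (cr_iff p hd (huu.trans hs2) hs3).mpr
            ⟨ps', partRel_trans hpr pr2, fun hr => hpus' (partRel_symm hr)⟩
        rw [h] at hcrp
        exact hquv' ((cr_iff q hd (huu.trans hs2) hs3).mp hcrp).2.1
      · exact nps' (hd ▸ partRel_symm hpr)
      · have hcrp : ({u, s', u', t'} : Finset (Fin k)) ∈ cr p :=
          (cr_iff p hd hs1 hs2).mpr ⟨hpr, ps', hpus'⟩
        rw [h] at hcrp
        exact hq ((cr_iff q hd hs1 hs2).mp hcrp).1

lemma dir {k : ℕ} {p q : Finpartition (Finset.univ : Finset (Fin k))} (h : cr p = cr q)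
    {x y : Fin k} (hx : x ∈ crossers p) (hy : y ∈ crossers p)
    (hxy : PartRel p x y) : PartRel q x y := by
  obtain ⟨u, v, cp1, hxuv⟩ := crosser_pair h hx
  obtain ⟨u', v', cp2, hyuv⟩ := crosser_pair h hy
  have pux : PartRel p u x := by
    rcases hxuv with rfl | rfl
    · exact partRel_refl p x
    · exact cp1.2.1
  have qux : PartRel q u x := by
    rcases hxuv with rfl | rfl
    · exact partRel_refl q x
    · exact cp1.2.2.1
  have pu'y : PartRel p u' y := by
    rcases hyuv with rfl | rfl
    · exact partRel_refl p y
    · exact cp2.2.1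
  have qu'y : PartRel q u' y := by
    rcases hyuv with rfl | rfl
    · exact partRel_refl q y
    · exact cp2.2.2.1
  have puu' : PartRel p u u' :=
    partRel_trans (partRel_trans pux hxy) (partRel_symm pu'y)
  have quu' : PartRel q u u' := by
    rcases lt_trichotomy u u' with h' | h' | h'
    · exact key h cp1 cp2 h' puu'
    · exact h' ▸ partRel_refl q u
    · exact partRel_symm (key h cp2 cp1 h' (partRel_symm puu'))
  exact partRel_trans (partRel_symm qux) (partRel_trans quu' qu'y)

/-- if `cr p = cr q`, then `χ(p) = χ(q)` and the restrictions of `p`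
and `q` to the common set of crossers coincide. -/
theorem stmt1 {k : ℕ} (p q : Finpartition (Finset.univ : Finset (Fin k)))
    (h : cr p = cr q) :
    crossers p = crossers q ∧
      ∀ x ∈ crossers p, ∀ y ∈ crossers p, (PartRel p x y ↔ PartRel q x y) := by
  have hcr : crossers p = crossers q := by unfold crossers; rw [h]
  refine ⟨hcr, fun x hx y hy => ⟨fun hxy => dir h hx hy hxy, fun hxy => ?_⟩⟩
  exact dir h.symm (hcr ▸ hx) (hcr ▸ hy) hxy
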